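/- Let m ≥ 1 and a1,...,am ≥ 1 be integers with a1···am − (−1)^m ≠ 0. The unique rational solution (w1,...,wm) of the system a_i·w_i + w_{i+1} = 1 (indices mod m, so a_m·w_m + w_1 = 1) is given by w_i = ρ(a_{i+1}, a_{i+2}, ..., a_m, a_1, ..., a_{i−1}) / (a_1···a_m − (−1)^m), where ρ(x1,...,xk) = x1···xk − x2···xk + ... + (−1)^k. -/

import Mathlib

/-- The alternating function ρ: ρ() = 1, ρ(x₁,...,x_k) = x₁·x₂···x_k − ρ(x₂,...,x_k). -/
def rho : List ℤ → ℤ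
  | [] => 1
  | x :: xs => x * xs.prod - rho xs

lemma rho_append (xs : List ℤ) (y : ℤ) :
    rho (xs ++ [y]) = y * rho xs - (-1)^xs.length := by
  induction xs with
  | nil => simp [rho]
  | cons x xs ih =>
    simp only [List.cons_append, rho, List.append_eq, ih, List.prod_append, List.length_cons,
      pow_succ, List.prod_cons, List.prod_nil, mul_one]
    ring

lemma prod_rot (m : ℕ) (a : ℕ → ℤ) (i : ℕ) (hi : i < m) :
    ∏ j ∈ Finset.range m, a ((i + j) % m) = ∏ j ∈ Finset.range m, a j := by
  have hm : 0 < m := by omega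
  apply Finset.prod_nbij' (fun j => (i + j) % m) (fun j => (j + (m - i)) % m)
  · intro j hj; exact Finset.mem_range.mpr (Nat.mod_lt _ hm)
  · intro j hj; exact Finset.mem_range.mpr (Nat.mod_lt _ hm)
  · intro j hj
    simp only [Finset.mem_range] at hj
    rw [Nat.mod_add_mod, show i + j + (m - i) = j + m by omega, Nat.add_mod_right,
      Nat.mod_eq_of_lt hj]
  · intro j hj
    simp only [Finset.mem_range] at hj
    rw [Nat.add_mod_mod, show i + (j + (m - i)) = j + m by omega, Nat.add_mod_right,
      Nat.mod_eq_of_lt hj]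
  · intro j hj; rfl

lemma key (m : ℕ) (hm : 1 ≤ m) (a : ℕ → ℤ) (i : ℕ) (hi : i < m) :
    a i * rho ((List.range (m-1)).map (fun j => a ((i+1+j) % m)))
      + rho ((List.range (m-1)).map (fun j => a (((i+1) % m + 1 + j) % m)))
      = (∏ j ∈ Finset.range m, a j) - (-1)^m := by
  obtain rfl | ⟨k, rfl⟩ : m = 1 ∨ (∃ k, m = k + 2) := by
    rcases m with _ | _ | k
    · omega
    · exact Or.inl rfl
    · exact Or.inr ⟨k, rfl⟩
  · interval_cases i
    simp [rho]
  · set m := k + 2 with hmdef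
    have hL1 : (List.range (m-1)).map (fun j => a ((i+1+j) % m))
        = a ((i+1) % m) :: (List.range k).map (fun j => a ((i+2+j) % m)) := by
      have h1 : m - 1 = k + 1 := by omega
      rw [h1, List.range_succ_eq_map, List.map_cons, List.map_map]
      refine congrArg₂ _ rfl ?_
      apply List.map_congr_left
      intro j _
      simp only [Function.comp]
      congr 2
      omega
    have hL2 : (List.range (m-1)).map (fun j => a (((i+1) % m + 1 + j) % m))
        = (List.range k).map (fun j => a ((i+2+j) % m)) ++ [a i] := by
      have h1 : m - 1 = k + 1 := by omega
      rw [h1, List.range_succ, List.map_append, List.map_cons, List.map_nil]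
      congr 1
      · apply List.map_congr_left
        intro j _
        congr 1
        rw [show (i+1) % m + 1 + j = (i+1) % m + (1 + j) by omega, Nat.mod_add_mod]
        congr 1
        omega
      · congr 1
        rw [show (i+1) % m + 1 + k = (i+1) % m + (1 + k) by omega, Nat.mod_add_mod,
          show i + 1 + (1 + k) = i + m by omega, Nat.add_mod_right, Nat.mod_eq_of_lt hi]
    rw [hL1, hL2, rho_append]
    simp only [rho, List.length_map, List.length_range]
    have hl : (((List.range k).map (fun j => a ((i+2+j) % m))).prod
        = ∏ j ∈ Finset.range k, a ((i+2+j) % m)) := rfl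
    have hP : (∏ j ∈ Finset.range m, a j)
        = (((List.range k).map (fun j => a ((i+2+j) % m))).prod * a ((i+1) % m)) * a i := by
      rw [← prod_rot m a i hi, Finset.prod_range_succ', Finset.prod_range_succ', hl,
        show i + (0+1) = i + 1 from rfl,
        show (i+0) % m = i from by rw [Nat.add_zero, Nat.mod_eq_of_lt hi]]
      congr 1
      congr 1
      apply Finset.prod_congr rfl
      intro j _
      congr 2
      omega
    rw [hP]
    ring

theorem stmt7 (m : ℕ) (hm : 1 ≤ m) (a : ℕ → ℤ) (ha : ∀ i, 1 ≤ a i)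
    (hD : (∏ i ∈ Finset.range m, a i) - (-1 : ℤ) ^ m ≠ 0)
    (w : ℕ → ℚ)
    (hw : ∀ i < m, (a i : ℚ) * w i + w ((i + 1) % m) = 1) :
    ∀ i < m, w i =
      ((rho ((List.range (m - 1)).map (fun j => a ((i + 1 + j) % m))) : ℤ) : ℚ) /
        (((∏ i ∈ Finset.range m, a i) - (-1 : ℤ) ^ m : ℤ) : ℚ) := by
  set D : ℤ := (∏ i ∈ Finset.range m, a i) - (-1 : ℤ) ^ m with hDdef
  set N : ℕ → ℤ := fun i => rho ((List.range (m - 1)).map (fun j => a ((i + 1 + j) % m)))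
    with hNdef
  have hDQ : ((D : ℚ)) ≠ 0 := by exact_mod_cast hD
  have hkey : ∀ i < m, a i * N i + N ((i + 1) % m) = D := by
    intro i hi
    have h := key m hm a i hi
    simpa [hNdef] using h
  set u : ℕ → ℚ := fun i => w i - (N i : ℚ) / (D : ℚ) with hudef
  have hu : ∀ i < m, u ((i + 1) % m) = -(a i : ℚ) * u i := by
    intro i hi
    have h1 := hw i hi
    have h2 : (a i : ℚ) * ((N i : ℚ) / D) + (N ((i + 1) % m) : ℚ) / D = 1 := by
      rw [← mul_div_assoc, ← add_div, div_eq_one_iff_eq hDQ]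
      exact_mod_cast hkey i hi
    simp only [hudef]
    linear_combination h1 - h2
  have chain : ∀ t, t ≤ m → u (t % m) = (∏ j ∈ Finset.range t, (-(a j : ℚ))) * u 0 := by
    intro t
    induction t with
    | zero => intro _; simp
    | succ t ih =>
      intro h
      have ht : t < m := by omega
      have h2 := hu t ht
      rw [show t % m = t from Nat.mod_eq_of_lt ht] at ih
      rw [h2, ih (le_of_lt ht), Finset.prod_range_succ]
      ring
  have h0 : u 0 = 0 := by
    have hm0 := chain m le_rfl
    rw [Nat.mod_self] at hm0
    have hprodneg : (∏ j ∈ Finset.range m, (-(a j : ℚ)))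
        = (-1)^m * ((∏ j ∈ Finset.range m, a j : ℤ) : ℚ) := by
      calc ∏ j ∈ Finset.range m, (-(a j : ℚ))
          = ∏ j ∈ Finset.range m, ((-1) * (a j : ℚ)) :=
            Finset.prod_congr rfl (fun j _ => by ring)
        _ = (-1)^m * ∏ j ∈ Finset.range m, (a j : ℚ) := by
            rw [Finset.prod_mul_distrib, Finset.prod_const, Finset.card_range]
        _ = _ := by push_cast; ring
    rw [hprodneg] at hm0
    have hc : ((-1 : ℚ)^m * ((∏ j ∈ Finset.range m, a j : ℤ) : ℚ) - 1) * u 0 = 0 := by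
      linear_combination -hm0
    rcases mul_eq_zero.mp hc with hc1 | hc2
    · exfalso
      apply hDQ
      have : ((D : ℚ)) = (-1)^m * ((-1 : ℚ)^m * ((∏ j ∈ Finset.range m, a j : ℤ) : ℚ) - 1) := by
        rw [hDdef]
        push_cast
        rw [mul_sub, ← mul_assoc, ← mul_pow]
        simp
      rw [this, hc1, mul_zero]
    · exact hc2
  intro i hi
  have := chain i (le_of_lt hi)
  rw [Nat.mod_eq_of_lt hi, h0, mul_zero] at this
  have : w i - (N i : ℚ) / D = 0 := this
  linarith
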